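/- Let P be a shortest s-t path with all vertices in V_r, r = (ε/2)d + W, d = d(s,t). Define sequences σ_s from s and σ_t from t as in the greedy skipping construction. Let x_k be the first vertex of σ_s with d(s,x_k) ≥ d/2 and y_ℓ the first vertex of σ_t with d(t,y_ℓ) ≥ d/2. Then k ≤ ⌈1/ε⌉, ℓ ≤ ⌈1/ε⌉, and d(x_k, y_{ℓ−1}) ≤ r; consequently x_k is within ⌈1/ε⌉ hops of s and within ℓ ≤ ⌈1/ε⌉ hops of t in the auxiliary graph H, i.e., the forward and backward BFS balls of hop-radius ⌈1/ε⌉ intersect on P. -/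

import Mathlib

/-- Let `P` be a shortest `s`-`t` path of length `d` with all
vertices in `V_r`, `r = (ε/2)d + W`. The greedy sequences `σ_s` (from `s`)
and `σ_t` (from `t`) are identified with their cumulative positions
`xs, ys : ℕ → ℝ` along `P` (`xs 0 = 0` is `s`, `ys 0 = d` is `t`; distances
along a shortest path are additive, so `d(x_i,x_j) = |xs j - xs i|` etc.).
Key facts (hypotheses): consecutive σ-vertices are more than `εd/2` apart
except possibly for a last step reaching the opposite endpoint, and since
`V(P) ⊆ V_r` each σ-step is a single hop of `H`, of length at most `r`.
Let `x_k` be the first vertex of `σ_s` with `d(s,x_k) ≥ d/2` and `y_ℓ` the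
first vertex of `σ_t` with `d(t,y_ℓ) ≥ d/2`. Then `k ≤ ⌈1/ε⌉`,
`ℓ ≤ ⌈1/ε⌉`, and `d(x_k, y_{ℓ-1}) ≤ r`; consequently `x_k` is within
`k ≤ ⌈1/ε⌉` hops of `s` (the steps of `σ_s` themselves) and within
`ℓ ≤ ⌈1/ε⌉` hops of `t` (follow `σ_t` to `y_{ℓ-1}`, then hop to `x_k`,
each hop of length at most `r`): the two BFS balls intersect on `P`. -/
theorem stmt_9 (ε d W r : ℝ) (hε : 0 < ε) (hd : 0 < d) (hW : 0 < W)
    (hr : r = ε * d / 2 + W)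
    (xs ys : ℕ → ℝ)
    (hxs0 : xs 0 = 0) (hys0 : ys 0 = d)
    (hxmono : Monotone xs) (hymono : Antitone ys)
    (hxrange : ∀ i, 0 ≤ xs i ∧ xs i ≤ d)
    (hyrange : ∀ i, 0 ≤ ys i ∧ ys i ≤ d)
    (hxgap : ∀ i, xs (i + 1) ≠ d → ε * d / 2 < xs (i + 1) - xs i)
    (hygap : ∀ i, ys (i + 1) ≠ 0 → ε * d / 2 < ys i - ys (i + 1))
    (hxstep : ∀ i, xs (i + 1) - xs i ≤ r)
    (hystep : ∀ i, ys i - ys (i + 1) ≤ r)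
    (k l : ℕ)
    (hk1 : d / 2 ≤ xs k) (hk2 : ∀ i < k, xs i < d / 2)
    (hl1 : d / 2 ≤ d - ys l) (hl2 : ∀ i < l, d - ys i < d / 2) :
    k ≤ ⌈1 / ε⌉₊ ∧ l ≤ ⌈1 / ε⌉₊ ∧ |xs k - ys (l - 1)| ≤ r ∧
      (∃ seq : ℕ → ℝ, seq 0 = d ∧ seq l = xs k ∧
        ∀ i < l, |seq i - seq (i + 1)| ≤ r) := by

  have hεd : 0 < ε * d / 2 := by positivity
  -- cumulative lower bound lemma
  have key : ∀ (f : ℕ → ℝ), f 0 = 0 →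
      ∀ m : ℕ, (∀ i, i + 1 ≤ m → ε * d / 2 < f (i + 1) - f i) →
      (m : ℝ) * (ε * d / 2) ≤ f m := by
    intro f hf0 m
    induction m with
    | zero => intro _; simp [hf0]
    | succ n ih =>
      intro h
      have h1 := ih (fun i hi => h i (by omega))
      have h2 := h n le_rfl
      push_cast
      nlinarith
  -- k ≥ 1, l ≥ 1
  have hk0 : 1 ≤ k := by
    by_contra h
    have : k = 0 := by omega
    rw [this, hxs0] at hk1; linarith
  have hl0 : 1 ≤ l := by
    by_contra h
    have : l = 0 := by omega
    rw [this, hys0] at hl1; linarith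
  have hceil : (1:ℝ) / ε ≤ (⌈1 / ε⌉₊ : ℝ) := Nat.le_ceil _
  -- bound for k
  have hkb : k ≤ ⌈1 / ε⌉₊ := by
    have hlow : ((k - 1 : ℕ) : ℝ) * (ε * d / 2) ≤ xs (k - 1) := by
      apply key xs hxs0
      intro i hi
      apply hxgap
      have hlt : xs (i + 1) < d / 2 := hk2 (i + 1) (by omega)
      intro hcon; rw [hcon] at hlt; linarith
    have hup : xs (k - 1) < d / 2 := hk2 (k - 1) (by omega)
    have : ((k - 1 : ℕ) : ℝ) < 1 / ε := by
      rw [lt_div_iff₀ hε]; nlinarith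
    have : ((k - 1 : ℕ) : ℝ) < (⌈1 / ε⌉₊ : ℝ) := lt_of_lt_of_le this hceil
    have := Nat.cast_lt.mp this
    omega
  have hlb : l ≤ ⌈1 / ε⌉₊ := by
    have hlow : ((l - 1 : ℕ) : ℝ) * (ε * d / 2) ≤ d - ys (l - 1) := by
      have := key (fun i => d - ys i) (by simp [hys0]) (l - 1) ?_
      · simpa using this
      · intro i hi
        have h2 : ys i - ys (i + 1) = (d - ys (i+1)) - (d - ys i) := by ring
        rw [← h2]
        apply hygap
        have hlt : d - ys (i + 1) < d / 2 := hl2 (i + 1) (by omega)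
        intro hcon; rw [hcon] at hlt; linarith
    have hup : d - ys (l - 1) < d / 2 := hl2 (l - 1) (by omega)
    have : ((l - 1 : ℕ) : ℝ) < 1 / ε := by
      rw [lt_div_iff₀ hε]; nlinarith
    have : ((l - 1 : ℕ) : ℝ) < (⌈1 / ε⌉₊ : ℝ) := lt_of_lt_of_le this hceil
    have := Nat.cast_lt.mp this
    omega
  -- |xs k - ys (l-1)| ≤ r
  have hk1' : xs (k - 1) < d / 2 := hk2 (k - 1) (by omega)
  have hks : xs k - xs (k - 1) ≤ r := by
    have := hxstep (k - 1); rwa [Nat.sub_add_cancel hk0] at this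
  have hl1' : d / 2 < ys (l - 1) := by
    have := hl2 (l - 1) (by omega); linarith
  have hls : ys (l - 1) - ys l ≤ r := by
    have := hystep (l - 1); rwa [Nat.sub_add_cancel hl0] at this
  have hysl : ys l ≤ d / 2 := by linarith
  have habs : |xs k - ys (l - 1)| ≤ r := by
    rw [abs_le]
    constructor <;> nlinarith
  refine ⟨hkb, hlb, habs, fun i => if i < l then ys i else xs k, ?_, ?_, ?_⟩
  · simp [hl0, Nat.lt_of_lt_of_le Nat.zero_lt_one hl0, hys0]
  · simp
  · intro i hi
    rcases Nat.lt_or_ge (i + 1) l with h | h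
    · simp only [if_pos hi, if_pos h]
      have h1 := hymono (Nat.le_succ i)
      have h2 := hystep i
      rw [abs_le]; constructor <;> linarith
    · have hil : i + 1 = l := by omega
      simp only [hil, if_pos hi, if_neg (lt_irrefl l)]
      have hi1 : i = l - 1 := by omega
      rw [hi1, abs_sub_comm]; exact habs
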